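/- Let F₁, F₂ ∈ ℝ^{d×d} and t ≥ 0. Then the matrix exponential of the block upper-triangular matrix [[F₁, I], [O, F₂]] scaled by t is exp(t·[[F₁, I], [O, F₂]]) = [[e^{tF₁}, ∫_0^t e^{(t−τ)F₁} e^{τF₂} dτ], [O, e^{tF₂}]]; in particular its top-right d×d block equals ∫_0^t e^{(t−τ)F₁} e^{τF₂} dτ. -/

import Mathlib

open MeasureTheory

noncomputable section

open NormedSpace

namespace ExpFromBlocksAux

variable (d : ℕ)

local notation "M" => Matrix (Fin d) (Fin d) ℝ
local notation "N" => Matrix (Fin d ⊕ Fin d) (Fin d ⊕ Fin d) ℝ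

lemma cont_exp_smul (F : M) : Continuous fun s : ℝ => exp (s • F) := by
  letI : NormedRing M := Matrix.linftyOpNormedRing
  letI : NormedAlgebra ℝ M := Matrix.linftyOpNormedAlgebra
  let +nondep : NormedAlgebra ℚ M := .restrictScalars ℚ ℝ M
  exact exp_continuous.comp (continuous_id.smul continuous_const)

/-- embedding of the (1,1) block as a continuous linear map -/
def L₁₁ : M →L[ℝ] N :=
  letI : NormedAddCommGroup M := Matrix.linftyOpNormedAddCommGroup
  letI : NormedAddCommGroup N := Matrix.linftyOpNormedAddCommGroup
  letI : NormedSpace ℝ M := Matrix.linftyOpNormedSpace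
  letI : NormedSpace ℝ N := Matrix.linftyOpNormedSpace
  LinearMap.toContinuousLinearMap
    { toFun := fun X => Matrix.fromBlocks X 0 0 0
      map_add' := by intro X Y; simp [Matrix.fromBlocks_add]
      map_smul' := by intro c X; simp [Matrix.fromBlocks_smul] }

def L₁₂ : M →L[ℝ] N :=
  letI : NormedAddCommGroup M := Matrix.linftyOpNormedAddCommGroup
  letI : NormedAddCommGroup N := Matrix.linftyOpNormedAddCommGroup
  letI : NormedSpace ℝ M := Matrix.linftyOpNormedSpace
  letI : NormedSpace ℝ N := Matrix.linftyOpNormedSpace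
  LinearMap.toContinuousLinearMap
    { toFun := fun X => Matrix.fromBlocks 0 X 0 0
      map_add' := by intro X Y; simp [Matrix.fromBlocks_add]
      map_smul' := by intro c X; simp [Matrix.fromBlocks_smul] }

def L₂₂ : M →L[ℝ] N :=
  letI : NormedAddCommGroup M := Matrix.linftyOpNormedAddCommGroup
  letI : NormedAddCommGroup N := Matrix.linftyOpNormedAddCommGroup
  letI : NormedSpace ℝ M := Matrix.linftyOpNormedSpace
  letI : NormedSpace ℝ N := Matrix.linftyOpNormedSpace
  LinearMap.toContinuousLinearMap
    { toFun := fun X => Matrix.fromBlocks 0 0 0 X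
      map_add' := by intro X Y; simp [Matrix.fromBlocks_add]
      map_smul' := by intro c X; simp [Matrix.fromBlocks_smul] }

@[simp] lemma L₁₁_apply (X : M) : L₁₁ d X = Matrix.fromBlocks X 0 0 0 := rfl
@[simp] lemma L₁₂_apply (X : M) : L₁₂ d X = Matrix.fromBlocks 0 X 0 0 := rfl
@[simp] lemma L₂₂_apply (X : M) : L₂₂ d X = Matrix.fromBlocks 0 0 0 X := rfl

/-- entry evaluation as a continuous linear map -/
def ev (i j : Fin d) : M →L[ℝ] ℝ :=
  letI : NormedAddCommGroup M := Matrix.linftyOpNormedAddCommGroup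
  letI : NormedSpace ℝ M := Matrix.linftyOpNormedSpace
  LinearMap.toContinuousLinearMap
    { toFun := fun X => X i j
      map_add' := by intro X Y; simp
      map_smul' := by intro c X; simp }

@[simp] lemma ev_apply (i j : Fin d) (X : M) : ev d i j X = X i j := rfl

/-- left multiplication as a continuous linear map -/
def mulL (C : M) : M →L[ℝ] M :=
  letI : NormedAddCommGroup M := Matrix.linftyOpNormedAddCommGroup
  letI : NormedSpace ℝ M := Matrix.linftyOpNormedSpace
  LinearMap.toContinuousLinearMap
    { toFun := fun X => C * X
      map_add' := by intro X Y; simp [Matrix.mul_add]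
      map_smul' := by intro c X; simp [Matrix.mul_smul] }

@[simp] lemma mulL_apply (C X : M) : mulL d C X = C * X := rfl

lemma exp_smul_mul_exp_neg_smul {n : Type*} [Fintype n] [DecidableEq n]
    (F : Matrix n n ℝ) (s : ℝ) :
    exp (s • F) * exp ((-s) • F) = 1 := by
  letI : NormedRing (Matrix n n ℝ) := Matrix.linftyOpNormedRing
  letI : NormedAlgebra ℝ (Matrix n n ℝ) := Matrix.linftyOpNormedAlgebra
  let +nondep : NormedAlgebra ℚ (Matrix n n ℝ) := .restrictScalars ℚ ℝ (Matrix n n ℝ)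
  rw [← Matrix.exp_add_of_commute _ _ (((Commute.refl F).smul_right (-s)).smul_left s), ← add_smul,
    add_neg_cancel, zero_smul, exp_zero]

end ExpFromBlocksAux

open ExpFromBlocksAux

/-- For `F₁, F₂ ∈ ℝ^{d×d}` and `t ≥ 0`,
`exp (t·[[F₁, I], [O, F₂]]) = [[e^{tF₁}, ∫₀ᵗ e^{(t-τ)F₁} e^{τF₂} dτ], [O, e^{tF₂}]]`
(the integral taken entrywise); in particular the top-right block is
`∫₀ᵗ e^{(t-τ)F₁} e^{τF₂} dτ`. -/
theorem exp_fromBlocks (d : ℕ) (F₁ F₂ : Matrix (Fin d) (Fin d) ℝ) (t : ℝ) (ht : 0 ≤ t) :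
    NormedSpace.exp (t • Matrix.fromBlocks F₁ 1 0 F₂) =
      Matrix.fromBlocks (NormedSpace.exp (t • F₁))
        (Matrix.of fun i j => ∫ τ in (0 : ℝ)..t,
          (NormedSpace.exp ((t - τ) • F₁) * NormedSpace.exp (τ • F₂)) i j)
        0 (NormedSpace.exp (t • F₂)) ∧
    (NormedSpace.exp (t • Matrix.fromBlocks F₁ 1 0 F₂)).toBlocks₁₂ =
      Matrix.of fun i j => ∫ τ in (0 : ℝ)..t,
        (NormedSpace.exp ((t - τ) • F₁) * NormedSpace.exp (τ • F₂)) i j := by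
  classical
  letI : NormedRing (Matrix (Fin d) (Fin d) ℝ) := Matrix.linftyOpNormedRing
  letI : NormedAlgebra ℝ (Matrix (Fin d) (Fin d) ℝ) := Matrix.linftyOpNormedAlgebra
  letI : NormedRing (Matrix (Fin d ⊕ Fin d) (Fin d ⊕ Fin d) ℝ) := Matrix.linftyOpNormedRing
  letI : NormedAlgebra ℝ (Matrix (Fin d ⊕ Fin d) (Fin d ⊕ Fin d) ℝ) :=
    Matrix.linftyOpNormedAlgebra
  let +nondep : NormedAlgebra ℚ (Matrix (Fin d) (Fin d) ℝ) :=
    .restrictScalars ℚ ℝ (Matrix (Fin d) (Fin d) ℝ)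
  let +nondep : NormedAlgebra ℚ (Matrix (Fin d ⊕ Fin d) (Fin d ⊕ Fin d) ℝ) :=
    .restrictScalars ℚ ℝ (Matrix (Fin d ⊕ Fin d) (Fin d ⊕ Fin d) ℝ)
  set A : Matrix (Fin d ⊕ Fin d) (Fin d ⊕ Fin d) ℝ := Matrix.fromBlocks F₁ 1 0 F₂ with hA
  set J : ℝ → Matrix (Fin d) (Fin d) ℝ :=
    fun s => ∫ τ in (0:ℝ)..s, exp ((-τ) • F₁) * exp (τ • F₂) with hJdef
  set H : ℝ → Matrix (Fin d) (Fin d) ℝ := fun s => exp (s • F₁) * J s with hHdef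
  set G : ℝ → Matrix (Fin d ⊕ Fin d) (Fin d ⊕ Fin d) ℝ :=
    fun s => Matrix.fromBlocks (exp (s • F₁)) (H s) 0 (exp (s • F₂)) with hGdef
  haveI : TopologicalSpace.PseudoMetrizableSpace (Matrix (Fin d) (Fin d) ℝ) :=
    inferInstanceAs (TopologicalSpace.PseudoMetrizableSpace (Fin d → Fin d → ℝ))
  have hq : Continuous fun τ : ℝ => exp ((-τ) • F₁) * exp (τ • F₂) :=
    ((cont_exp_smul d F₁).comp continuous_neg).mul (cont_exp_smul d F₂)
  have hG : ∀ s, HasDerivAt G (A * G s) s := by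
    intro s
    have h1 := hasDerivAt_exp_smul_const' (𝕂 := ℝ) F₁ s
    have h2 := hasDerivAt_exp_smul_const' (𝕂 := ℝ) F₂ s
    have hJ : HasDerivAt J (exp ((-s) • F₁) * exp (s • F₂)) s :=
      intervalIntegral.integral_hasDerivAt_right (hq.intervalIntegrable _ _)
        (hq.stronglyMeasurableAtFilter _ _) hq.continuousAt
    have hH : HasDerivAt H (F₁ * H s + exp (s • F₂)) s := by
      have h := (hasDerivAt_exp_smul_const' (𝕂 := ℝ) F₁ s).mul hJ
      have key : exp (s • F₁) * (exp (-(s • F₁)) * exp (s • F₂)) = exp (s • F₂) := by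
        rw [← neg_smul, ← mul_assoc, exp_smul_mul_exp_neg_smul, one_mul]
      convert h using 1
      case e'_4 => rfl
      case e'_5 => rfl
      case e'_6 => rfl
      case e'_8 => rfl
      case e'_9 =>
        change F₁ * (exp (s • F₁) * J s) + exp (s • F₂) =
          F₁ * exp (s • F₁) * J s + exp (s • F₁) * (exp ((-s) • F₁) * exp (s • F₂))
        rw [← mul_assoc (exp (s • F₁)), exp_smul_mul_exp_neg_smul, one_mul, mul_assoc]
    have hsum : HasDerivAt G
        (L₁₁ d (F₁ * exp (s • F₁)) + L₁₂ d (F₁ * H s + exp (s • F₂))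
          + L₂₂ d (F₂ * exp (s • F₂))) s := by
      have hfun : G = fun u => L₁₁ d (exp (u • F₁)) + L₁₂ d (H u) + L₂₂ d (exp (u • F₂)) := by
        funext u
        simp [hGdef, Matrix.fromBlocks_add]
      rw [hfun]
      exact (((L₁₁ d).hasFDerivAt.comp_hasDerivAt s h1).add
        ((L₁₂ d).hasFDerivAt.comp_hasDerivAt s hH)).add
        ((L₂₂ d).hasFDerivAt.comp_hasDerivAt s h2)
    convert hsum using 1
    simp [hGdef, hA, Matrix.fromBlocks_multiply, Matrix.fromBlocks_add]
  set K : ℝ → Matrix (Fin d ⊕ Fin d) (Fin d ⊕ Fin d) ℝ :=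
    fun s => exp ((-s) • A) * G s with hKdef
  have hK : ∀ s, HasDerivAt K 0 s := by
    intro s
    have hneg : HasDerivAt (fun u : ℝ => -u) (-1) s := (hasDerivAt_id s).neg
    have hexp : HasDerivAt (fun u : ℝ => exp ((-u) • A)) (-(exp ((-s) • A) * A)) s := by
      have h := (hasDerivAt_exp_smul_const (𝕂 := ℝ) A (-s)).scomp s hneg
      convert h using 1
      case e'_4 => rfl
      case e'_5 => rfl
      case e'_6 => rfl
      case e'_8 => rfl
      case e'_9 => exact (neg_one_smul ℝ _).symm
    have h := hexp.mul (hG s)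
    convert h using 1
    case e'_4 => rfl
    case e'_5 => rfl
    case e'_6 => rfl
    case e'_8 => rfl
    case e'_9 =>
      change (0 : Matrix (Fin d ⊕ Fin d) (Fin d ⊕ Fin d) ℝ) =
        -(exp ((-s) • A) * A) * G s + exp ((-s) • A) * (A * G s)
      rw [neg_mul, mul_assoc, neg_add_cancel]
  have hKconst : ∀ s, K s = K 0 := by
    intro s
    exact is_const_of_deriv_eq_zero (fun u => (hK u).differentiableAt)
      (fun u => (hK u).deriv) s 0
  have hK0 : K 0 = 1 := by
    simp [hKdef, hGdef, hHdef, hJdef, Matrix.fromBlocks_one]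
  have hKt : exp ((-t) • A) * G t = 1 := (hKconst t).trans hK0
  have hGt : G t = exp (t • A) :=
    calc G t = 1 * G t := (one_mul _).symm
      _ = exp (t • A) * exp ((-t) • A) * G t := by rw [exp_smul_mul_exp_neg_smul]
      _ = exp (t • A) * (exp ((-t) • A) * G t) := mul_assoc _ _ _
      _ = exp (t • A) := by rw [hKt, mul_one]
  have hcont' : Continuous fun τ : ℝ => exp ((t - τ) • F₁) * exp (τ • F₂) :=
    ((cont_exp_smul d F₁).comp (continuous_const.sub continuous_id)).mul (cont_exp_smul d F₂)
  have hHt : H t = ∫ τ in (0:ℝ)..t, exp ((t - τ) • F₁) * exp (τ • F₂) := by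
    have h1 := (mulL d (exp (t • F₁))).intervalIntegral_comp_comm
      (hq.intervalIntegrable (μ := volume) (0:ℝ) t)
    have h2 : ∀ τ : ℝ, exp (t • F₁) * (exp ((-τ) • F₁) * exp (τ • F₂))
        = exp ((t - τ) • F₁) * exp (τ • F₂) := by
      intro τ
      rw [← mul_assoc]
      congr 1
      rw [← Matrix.exp_add_of_commute _ _ (((Commute.refl F₁).smul_right (-τ)).smul_left t), ← add_smul,
        ← sub_eq_add_neg]
    calc H t = mulL d (exp (t • F₁)) (J t) := rfl
      _ = ∫ τ in (0:ℝ)..t, mulL d (exp (t • F₁)) (exp ((-τ) • F₁) * exp (τ • F₂)) :=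
        h1.symm
      _ = ∫ τ in (0:ℝ)..t, exp ((t - τ) • F₁) * exp (τ • F₂) := by
        refine intervalIntegral.integral_congr fun τ _ => ?_
        simpa using h2 τ
  have hH' : H t = Matrix.of fun i j => ∫ τ in (0:ℝ)..t,
      (exp ((t - τ) • F₁) * exp (τ • F₂)) i j := by
    rw [hHt]
    ext i j
    have h := (ev d i j).intervalIntegral_comp_comm (hcont'.intervalIntegrable (μ := volume) (0:ℝ) t)
    exact h.symm
  have hmain : exp (t • A) =
      Matrix.fromBlocks (exp (t • F₁))
        (Matrix.of fun i j => ∫ τ in (0 : ℝ)..t,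
          (exp ((t - τ) • F₁) * exp (τ • F₂)) i j)
        0 (exp (t • F₂)) := by
    rw [← hGt, hGdef]
    simp only []
    rw [hH']
  refine ⟨hmain, ?_⟩
  rw [hmain, Matrix.toBlocks_fromBlocks₁₂]

end
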